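/- arXiv:0803.2459 — 2 statements merged into one kernel-verified Lean document; each statement's English description precedes it below -/
import Mathlib

section
/- Let $r:\mathbb{N}^*\to(0,1]$ satisfy $K_r := \inf_{n\ge 1} n\,r(n) > 0$ and $\sup_{n\ge 1} n\,r(n) \le 1$, and let $\tilde r(n) := K_r/n$. Then for the processor-sharing map with rate $\tilde r$, the total workload evolves as a Lindley recursion with drain rate $K_r$: for any finite counting measure $\mu$, $s \ge 0$, $x \ge 0$, $\langle \Phi^{\tilde r}(\mu + \delta_s, x), I\rangle = \left[\langle \mu, I\rangle + s - K_r x\right]^+$, where $I$ is the identity function and $\langle\nu, I\rangle = \int t\,d\nu(t)$. -/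
open MeasureTheory Filter Topology

/-- The partial integral order `≼` on finite positive measures. -/
def IntOrder (μ ν : Measure ℝ) : Prop :=
  ∀ f : ℝ → ℝ, Measurable f → Monotone f → (∀ x, 0 ≤ f x) → (∃ C, ∀ x, f x ≤ C) →
    ∫ x, f x ∂μ ≤ ∫ x, f x ∂ν

/-- The `i`-th smallest atom (1-based) of the finite counting measure represented by the
multiset `m`. -/
noncomputable def atom (m : Multiset ℝ) (i : ℕ) : ℝ :=
  (m.sort (· ≤ ·)).getD (i - 1) 0

/-- `γ_i^r(m, x)`. -/
noncomputable def gam (r : ℕ → ℝ) (m : Multiset ℝ) (x : ℝ) (i : ℕ) : ℝ :=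
  r (Multiset.card m - i + 1) *
    (x - ∑ j ∈ Finset.Icc 1 (i - 1),
      atom m j * (1 / r (Multiset.card m - j + 1) - 1 / r (Multiset.card m - j)))

open Classical in
/-- `i^r(m, x) = max {i ≤ N(m) : α_i(m) ≤ γ_i^r(m,x)}`, with `max ∅ = 0`. -/
noncomputable def irdx (r : ℕ → ℝ) (m : Multiset ℝ) (x : ℝ) : ℕ :=
  (((Finset.Icc 1 (Multiset.card m)).filter (fun i => atom m i ≤ gam r m x i)).max).unbotD 0

/-- `γ^r(m, x)`, the amount of attained service per customer by time `x`
(`0` for the empty profile). -/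
noncomputable def gammaStar (r : ℕ → ℝ) (m : Multiset ℝ) (x : ℝ) : ℝ :=
  if m = 0 then 0 else gam r m x (min (irdx r m x + 1) (Multiset.card m))

open Classical in
/-- The one-step processor-sharing map `Φ^r(·, x) = τ_{γ^r(·,x)}`. -/
noncomputable def PhiM (r : ℕ → ℝ) (m : Multiset ℝ) (x : ℝ) : Multiset ℝ :=
  (m.filter (fun a => gammaStar r m x < a)).map (fun a => a - gammaStar r m x)

/-- The counting measure associated to a multiset of atoms. -/
noncomputable def toMeas (m : Multiset ℝ) : Measure ℝ :=
  (m.map (fun a => (Measure.dirac a : Measure ℝ))).sum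

lemma integrable_dirac' (f : ℝ → ℝ) (a : ℝ) : Integrable f (Measure.dirac a) := by
  have : f =ᵐ[Measure.dirac a] (fun _ => f a) := by
    rw [MeasureTheory.ae_dirac_eq]; exact Filter.eventually_pure.mpr rfl
  exact (integrable_const (f a)).congr this.symm

lemma toMeas_cons (a : ℝ) (t : Multiset ℝ) :
    toMeas (a ::ₘ t) = Measure.dirac a + toMeas t := by
  simp [toMeas]

lemma integrable_id_toMeas (m : Multiset ℝ) : Integrable (fun t : ℝ => t) (toMeas m) := by
  induction m using Multiset.induction_on with
  | empty => simp [toMeas]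
  | cons a t ih =>
    rw [toMeas_cons]
    exact (integrable_dirac' _ a).add_measure ih

lemma integral_toMeas (m : Multiset ℝ) : ∫ t, t ∂(toMeas m) = m.sum := by
  induction m using Multiset.induction_on with
  | empty => simp [toMeas]
  | cons a t ih =>
    rw [toMeas_cons, integral_add_measure (integrable_dirac' _ a) (integrable_id_toMeas t),
      integral_dirac, ih, Multiset.sum_cons]

lemma list_map_sum_eq (g : ℝ → ℝ) :
    ∀ l : List ℝ, (l.map g).sum = ∑ i ∈ Finset.range l.length, g (l.getD i 0)
  | [] => by simp
  | a :: l => by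
    simp [List.map_cons, List.sum_cons, list_map_sum_eq g l, Finset.sum_range_succ',
      add_comm]

lemma sum_map_filter (p : ℝ → Prop) [DecidablePred p] (f : ℝ → ℝ) (s : Multiset ℝ) :
    ((s.filter p).map f).sum = (s.map (fun a => if p a then f a else 0)).sum := by
  induction s using Multiset.induction_on with
  | empty => simp
  | cons a t ih =>
    by_cases h : p a <;>
      simp [Multiset.filter_cons_of_pos, Multiset.filter_cons_of_neg, h, ih]

/-- Under the rate function `r̃(n) = K_r / n` (constant throughput `K_r`), the workload
evolves as a Lindley recursion with drain rate `K_r`: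
`⟨Φ^{r̃}(μ + δ_s, x), I⟩ = [⟨μ, I⟩ + s - K_r x]⁺`. -/
theorem stmt16 (K : ℝ) (hK : 0 < K) (hK1 : K ≤ 1)
    (m : Multiset ℝ) (hm : ∀ a ∈ m, (0:ℝ) ≤ a)
    (s x : ℝ) (hs : 0 ≤ s) (hx : 0 ≤ x) :
    ∫ t, t ∂(toMeas (PhiM (fun n => K / n) (s ::ₘ m) x)) =
      max ((∫ t, t ∂(toMeas m)) + s - K * x) 0 := by
  classical
  have hK0 : (K : ℝ) ≠ 0 := ne_of_gt hK
  set r : ℕ → ℝ := fun n => K / n with hr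
  set M : Multiset ℝ := s ::ₘ m with hMdef
  set L : List ℝ := M.sort (· ≤ ·) with hLdef
  set N : ℕ := Multiset.card M with hNdef
  have hlen : L.length = N := Multiset.length_sort _
  have hN1 : 1 ≤ N := by
    rw [hNdef, hMdef]; simp
  have hML : M = (L : Multiset ℝ) := (Multiset.sort_eq M _).symm
  have hsort : L.Pairwise (· ≤ ·) := Multiset.pairwise_sort M _
  set A : ℕ → ℝ := fun i => L.getD i 0 with hAdef
  have hmono : ∀ i j : ℕ, i ≤ j → j < N → A i ≤ A j := by
    intro i j hij hj
    have hj' : j < L.length := by rw [hlen]; exact hj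
    have hi' : i < L.length := lt_of_le_of_lt hij hj'
    have e0 := hsort.rel_get_of_le (a := ⟨i, hi'⟩) (b := ⟨j, hj'⟩) hij
    have e : L[i] ≤ L[j] := by simpa using e0
    show L.getD i 0 ≤ L.getD j 0
    rw [List.getD_eq_getElem L 0 hi', List.getD_eq_getElem L 0 hj']
    exact e
  have hatom : ∀ i : ℕ, atom M i = A (i - 1) := fun i => rfl
  set S : ℕ → ℝ := fun k => ∑ j ∈ Finset.range k, A j with hSdef
  -- the explicit formula for gam
  have hgam : ∀ i : ℕ, gam r M x i = (K * x - S (i - 1)) / ((N - i + 1 : ℕ) : ℝ) := by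
    intro i
    have hc : ((N - i + 1 : ℕ) : ℝ) ≠ 0 := by positivity
    unfold gam
    rw [show Multiset.card M = N from hNdef.symm]
    have hterm : ∀ j : ℕ, (1 / r (N - j + 1) - 1 / r (N - j)) = 1 / K := by
      intro j
      rw [hr]
      simp only [one_div_div]
      push_cast
      field_simp
      ring
    have hsum : ∑ j ∈ Finset.Icc 1 (i - 1),
        atom M j * (1 / r (N - j + 1) - 1 / r (N - j))
        = S (i - 1) / K := by
      have : ∀ j ∈ Finset.Icc 1 (i - 1),
          atom M j * (1 / r (N - j + 1) - 1 / r (N - j)) = atom M j * (1 / K) :=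
        fun j _ => by rw [hterm j]
      rw [Finset.sum_congr rfl this, ← Finset.Ico_add_one_right_eq_Icc, Finset.sum_Ico_eq_sum_range]
      have h2 : i - 1 + 1 - 1 = i - 1 := by omega
      rw [h2, hSdef]
      rw [Finset.sum_div]
      refine Finset.sum_congr rfl fun k _ => ?_
      rw [hatom]
      have : 1 + k - 1 = k := by omega
      rw [this]
      ring
    rw [hsum, hr]
    field_simp
  have hSN : ∀ k : ℕ, 1 ≤ k → S k = S (k - 1) + A (k - 1) := by
    intro k hk
    obtain ⟨n, rfl⟩ : ∃ n, k = n + 1 := ⟨k - 1, by omega⟩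
    simp only [hSdef]
    have h1 : n + 1 - 1 = n := rfl
    rw [h1, Finset.sum_range_succ]
  -- facts about irdx
  set istar : ℕ := irdx r M x with histar
  have hIR : istar =
      (((Finset.Icc 1 N).filter (fun i => atom M i ≤ gam r M x i)).max).unbotD 0 := by
    rw [histar]
    unfold irdx
    rw [show Multiset.card M = N from hNdef.symm]
  have h_istar_le : istar ≤ N ∧ (1 ≤ istar → atom M istar ≤ gam r M x istar) ∧
      (∀ i : ℕ, 1 ≤ i → i ≤ N → istar < i → gam r M x i < atom M i) := by
    set F : Finset ℕ := (Finset.Icc 1 N).filter (fun i => atom M i ≤ gam r M x i) with hF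
    rcases Finset.eq_empty_or_nonempty F with hFe | hFn
    · have h0 : istar = 0 := by rw [hIR, hFe]; simp
      refine ⟨by omega, by omega, ?_⟩
      intro i h1 h2 _
      by_contra hcon
      push_neg at hcon
      have : i ∈ F := by
        rw [hF, Finset.mem_filter]
        exact ⟨Finset.mem_Icc.2 ⟨h1, h2⟩, hcon⟩
      rw [hFe] at this
      exact absurd this (Finset.notMem_empty i)
    · obtain ⟨b, hb⟩ := Finset.max_of_nonempty hFn
      have hib : istar = b := by rw [hIR, hb]; rfl
      have hbmem : b ∈ F := Finset.mem_of_max hb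
      rw [hF, Finset.mem_filter, Finset.mem_Icc] at hbmem
      refine ⟨hib ▸ hbmem.1.2, fun _ => hib ▸ hbmem.2, ?_⟩
      intro i h1 h2 hlt
      by_contra hcon
      push_neg at hcon
      have hiF : i ∈ F := by
        rw [hF, Finset.mem_filter]
        exact ⟨Finset.mem_Icc.2 ⟨h1, h2⟩, hcon⟩
      have := Finset.le_max_of_eq hiF hb
      omega
  obtain ⟨histarN, histarmem, hgt⟩ := h_istar_le
  -- gammaStar
  set γ : ℝ := gammaStar r M x with hγ
  have hγval : γ = gam r M x (min (istar + 1) N) := by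
    rw [hγ]
    unfold gammaStar
    rw [if_neg (by rw [hMdef]; exact Multiset.cons_ne_zero),
      show Multiset.card M = N from hNdef.symm, ← histar]
  -- workload sums
  set W : ℝ := S N with hW
  have hWsum : W = M.sum := by
    have h1 := list_map_sum_eq id L
    simp only [List.map_id, id_eq] at h1
    simp only [hW, hSdef, hAdef, ← hlen, ← h1]
    rw [hML, Multiset.sum_coe]
  have hMsum : M.sum = s + m.sum := by rw [hMdef, Multiset.sum_cons]
  -- LHS as a finite sum
  have hLHS : ∫ t, t ∂(toMeas (PhiM r M x)) =
      ∑ i ∈ Finset.range N, (if γ < A i then A i - γ else 0) := by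
    rw [integral_toMeas]
    unfold PhiM
    rw [← hγ]
    rw [sum_map_filter (fun a => γ < a) (fun a => a - γ) M]
    rw [hML, Multiset.map_coe, Multiset.sum_coe, list_map_sum_eq, hlen]
  rw [integral_toMeas m]
  have hRHS : m.sum + s - K * x = W - K * x := by
    rw [hWsum, hMsum]; ring
  rw [hRHS]
  rw [hLHS]
  -- case split
  rcases eq_or_lt_of_le histarN with hcase | hcase
  · -- istar = N : system empties
    have hmin : min (istar + 1) N = N := by omega
    have hγeq : γ = K * x - S (N - 1) := by
      rw [hγval, hmin, hgam]
      have : N - N + 1 = 1 := by omega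
      rw [this]
      norm_num
    have hlast : A (N - 1) ≤ γ := by
      have h := histarmem (by omega)
      rw [hatom, hcase] at h
      have h2 : gam r M x N = γ := by
        rw [hgam, hγeq, show N - N + 1 = 1 from by omega]
        norm_num
      rw [h2] at h
      exact h
    have hzero : ∀ i ∈ Finset.range N, (if γ < A i then A i - γ else 0) = 0 := by
      intro i hi
      rw [Finset.mem_range] at hi
      have : A i ≤ γ := le_trans (hmono i (N - 1) (by omega) (by omega)) hlast
      rw [if_neg (not_lt.2 this)]
    rw [Finset.sum_congr rfl hzero, Finset.sum_const_zero]
    have hWle : W - K * x ≤ 0 := by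
      have hWeq : W = S (N - 1) + A (N - 1) := by
        rw [hW]; exact hSN N hN1
      rw [hWeq]
      have := hlast
      rw [hγeq] at this
      linarith
    rw [max_eq_right hWle]
  · -- istar < N
    have hmin : min (istar + 1) N = istar + 1 := by omega
    have hNi : ((N - istar : ℕ) : ℝ) ≠ 0 := by
      have : 1 ≤ N - istar := by omega
      positivity
    have hNipos : (0:ℝ) < ((N - istar : ℕ) : ℝ) := by
      have : 1 ≤ N - istar := by omega
      exact_mod_cast Nat.pos_of_ne_zero (by omega)
    have hγeq : γ = (K * x - S istar) / ((N - istar : ℕ) : ℝ) := by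
      rw [hγval, hmin, hgam]
      have h1 : istar + 1 - 1 = istar := by omega
      have h2 : N - (istar + 1) + 1 = N - istar := by omega
      rw [h1, h2]
    -- γ < A istar
    have hup : γ < A istar := by
      have := hgt (istar + 1) (by omega) (by omega) (by omega)
      rw [hatom] at this
      have h1 : istar + 1 - 1 = istar := by omega
      rw [h1] at this
      rw [hγval, hmin]
      exact this
    -- A i ≤ γ for i < istar
    have hsmall : ∀ i : ℕ, i < istar → A i ≤ γ := by
      intro i hi
      have h1 : 1 ≤ istar := by omega
      have hmem := histarmem h1
      rw [hatom] at hmem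
      -- step: gam istar ≤ γ
      have hstep : gam r M x istar ≤ γ := by
        have hSk : S istar = S (istar - 1) + A (istar - 1) := hSN istar h1
        have hcast : ((N - istar + 1 : ℕ) : ℝ) = ((N - istar : ℕ) : ℝ) + 1 := by
          push_cast; ring
        have hd1pos : (0:ℝ) < ((N - istar + 1 : ℕ) : ℝ) := by positivity
        have hmem' : A (istar - 1) * ((N - istar + 1 : ℕ) : ℝ) ≤ K * x - S (istar - 1) := by
          have h := hmem
          rw [hgam istar] at h
          exact (le_div_iff₀ hd1pos).mp h
        rw [hgam, hγeq, div_le_div_iff₀ hd1pos hNipos, hSk]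
        rw [hcast] at hmem' ⊢
        nlinarith [hmem', hNipos]
      calc A i ≤ A (istar - 1) := hmono i (istar - 1) (by omega) (by omega)
        _ ≤ gam r M x istar := hmem
        _ ≤ γ := hstep
    -- A i > γ for istar ≤ i < N
    have hbig : ∀ i : ℕ, istar ≤ i → i < N → γ < A i :=
      fun i hi hiN => lt_of_lt_of_le hup (hmono istar i hi hiN)
    -- evaluate the sum
    have hsum1 : ∑ i ∈ Finset.range N, (if γ < A i then A i - γ else 0)
        = ∑ i ∈ Finset.Ico istar N, (A i - γ) := by
      rw [Finset.range_eq_Ico, ← Finset.sum_Ico_consecutive _ (Nat.zero_le istar) (le_of_lt hcase)]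
      have e1 : ∑ i ∈ Finset.Ico 0 istar, (if γ < A i then A i - γ else 0) = 0 := by
        apply Finset.sum_eq_zero
        intro i hi
        rw [Finset.mem_Ico] at hi
        rw [if_neg (not_lt.2 (hsmall i hi.2))]
      have e2 : ∑ i ∈ Finset.Ico istar N, (if γ < A i then A i - γ else 0)
          = ∑ i ∈ Finset.Ico istar N, (A i - γ) := by
        apply Finset.sum_congr rfl
        intro i hi
        rw [Finset.mem_Ico] at hi
        rw [if_pos (hbig i hi.1 hi.2)]
      rw [e1, e2, zero_add]
    have hsum2 : ∑ i ∈ Finset.Ico istar N, (A i - γ) = W - K * x := by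
      have hIcoA : ∑ i ∈ Finset.Ico istar N, A i = W - S istar := by
        have h := Finset.sum_Ico_consecutive A (Nat.zero_le istar) (le_of_lt hcase)
        rw [← Finset.range_eq_Ico, ← Finset.range_eq_Ico] at h
        simp only [hW, hSdef]
        linarith [h]
      have hc2 : ((N - istar : ℕ) : ℝ) * γ = K * x - S istar := by
        rw [hγeq, mul_comm, div_mul_cancel₀ _ hNi]
      rw [Finset.sum_sub_distrib, Finset.sum_const, Nat.card_Ico, nsmul_eq_mul, hIcoA, hc2]
      ring
    rw [hsum1, hsum2]
    have hpos : 0 < W - K * x := by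
      rw [← hsum2]
      apply Finset.sum_pos
      · intro i hi
        rw [Finset.mem_Ico] at hi
        have := hbig i hi.1 hi.2
        linarith
      · exact ⟨istar, Finset.mem_Ico.2 ⟨le_refl _, hcase⟩⟩
    rw [max_eq_left (le_of_lt hpos)]
end

section
/- In the ergodic Palm setting with rate function $r$ satisfying $\sup_n n\,r(n) \le 1$ and $K_r = \inf_n n\,r(n) > 0$, suppose the stability condition $\mathbb{E}[\sigma] < K_r\,\mathbb{E}[\xi]$ holds and let $W^{K_r}$ be the unique a.s. finite solution of the Loynes equation $W\circ\theta = [W + \sigma - K_r\xi]^+$. Then any finite counting-measure solution $\mu^r$ of the stationarity equation $\mu\circ\theta = \Phi^r(\mu + \delta_\sigma, \xi)$ satisfies $\langle \mu^r, I\rangle \le W^{K_r}$ almost surely. -/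
open MeasureTheory Filter Topology

private lemma list_sum_map_eq (f : ℝ → ℝ) (l : List ℝ) :
    (l.map f).sum = ∑ j ∈ Finset.range l.length, f (l.getD j 0) := by
  induction l with
  | nil => simp
  | cons a t ih => simp [Finset.sum_range_succ', ih, add_comm]

private lemma sum_range_shift (f : ℕ → ℝ) (N : ℕ) :
    (∑ j ∈ Finset.range N, f (j + 1)) = ∑ j ∈ Finset.Icc 1 N, f j := by
  induction N with
  | zero => simp
  | succ n ih =>
      rw [Finset.sum_range_succ, ih, Finset.sum_Icc_succ_top (by omega)]

private lemma multiset_sum_map (f : ℝ → ℝ) (m : Multiset ℝ) :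
    (m.map f).sum = ∑ j ∈ Finset.Icc 1 (Multiset.card m), f (atom m j) := by
  have hl : ((m.sort (· ≤ ·) : List ℝ) : Multiset ℝ) = m := Multiset.sort_eq _ _
  conv_lhs => rw [← hl]
  rw [Multiset.map_coe, Multiset.sum_coe]
  rw [list_sum_map_eq]
  have hlen : (m.sort (· ≤ ·)).length = Multiset.card m := Multiset.length_sort _
  rw [hlen, ← sum_range_shift (fun j => f (atom m j)) (Multiset.card m)]
  refine Finset.sum_congr rfl fun j _ => ?_
  simp [atom]

private lemma atom_mem (m : Multiset ℝ) (j : ℕ) (h1 : 1 ≤ j) (h2 : j ≤ Multiset.card m) :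
    atom m j ∈ m := by
  have hlen : (m.sort (· ≤ ·)).length = Multiset.card m := Multiset.length_sort _
  have hj : j - 1 < (m.sort (· ≤ ·)).length := by omega
  have : atom m j ∈ m.sort (· ≤ ·) := by
    rw [atom, List.getD_eq_getElem _ _ hj]
    exact List.getElem_mem hj
  rwa [← Multiset.mem_coe, Multiset.sort_eq] at this

private lemma atom_mono (m : Multiset ℝ) (j k : ℕ) (h1 : 1 ≤ j) (hjk : j ≤ k)
    (h2 : k ≤ Multiset.card m) : atom m j ≤ atom m k := by
  have hlen : (m.sort (· ≤ ·)).length = Multiset.card m := Multiset.length_sort _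
  rcases eq_or_lt_of_le hjk with rfl | hlt
  · exact le_refl _
  · have hs : (m.sort (· ≤ ·)).Pairwise (· ≤ ·) := Multiset.pairwise_sort _ _
    have hj : j - 1 < (m.sort (· ≤ ·)).length := by omega
    have hk : k - 1 < (m.sort (· ≤ ·)).length := by omega
    rw [atom, atom, List.getD_eq_getElem _ _ hj, List.getD_eq_getElem _ _ hk]
    exact List.pairwise_iff_getElem.mp hs _ _ hj hk (by omega)


private lemma phi_sum_id (γ : ℝ) (m : Multiset ℝ) [DecidablePred (fun b : ℝ => γ < b)] :
    ((m.filter (fun b => γ < b)).map (fun b => b - γ)).sum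
      + (m.map (fun b => min b γ)).sum = m.sum := by
  induction m using Multiset.induction_on with
  | empty => simp
  | cons a s ih =>
      by_cases h : γ < a
      · rw [Multiset.filter_cons_of_pos _ h]
        simp only [Multiset.map_cons, Multiset.sum_cons, min_eq_right h.le]
        linarith [ih]
      · rw [Multiset.filter_cons_of_neg _ h]
        simp only [Multiset.map_cons, Multiset.sum_cons, min_eq_left (not_lt.mp h)]
        linarith [ih]

private lemma phiM_sum_le (r : ℕ → ℝ) (K : ℝ) (hKpos : 0 < K)
    (hK : ∀ n : ℕ, 1 ≤ n → K ≤ (n : ℝ) * r n)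
    (m : Multiset ℝ) (hm : m ≠ 0) (hma : ∀ b ∈ m, 0 ≤ b)
    (x : ℝ) (hx : 0 ≤ x) :
    (PhiM r m x).sum ≤ max (m.sum - K * x) 0 := by
  classical
  set N := Multiset.card m with hNdef
  have hN : 1 ≤ N := by
    rw [hNdef, Nat.one_le_iff_ne_zero]
    simpa using hm
  have hrpos : ∀ n : ℕ, 1 ≤ n → 0 < r n := by
    intro n hn
    by_contra h
    push_neg at h
    have : (n : ℝ) * r n ≤ 0 := mul_nonpos_of_nonneg_of_nonpos (by positivity) h
    linarith [hK n hn]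
  set a : ℕ → ℝ := fun j => if j = 0 then 0 else atom m j with hadef
  have ha0 : a 0 = 0 := rfl
  have haat : ∀ j, 1 ≤ j → a j = atom m j := by
    intro j hj; simp [hadef, Nat.one_le_iff_ne_zero.mp hj]
  have hanonneg : ∀ j, j ≤ N → 0 ≤ a j := by
    intro j hj
    rcases Nat.eq_zero_or_pos j with rfl | hj1
    · exact le_of_eq ha0.symm
    · rw [haat j hj1]; exact hma _ (atom_mem m j hj1 hj)
  have hamono : ∀ j k, j ≤ k → k ≤ N → a j ≤ a k := by
    intro j k hjk hk
    rcases Nat.eq_zero_or_pos j with rfl | hj1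
    · rw [ha0]; exact hanonneg k hk
    · rw [haat j hj1, haat k (le_trans hj1 hjk)]
      exact atom_mono m j k hj1 hjk hk
  set S : ℕ → ℝ := fun i => ∑ j ∈ Finset.Icc 1 i, a j * (1 / r (N - j + 1) - 1 / r (N - j))
    with hSdef
  set t : ℕ → ℝ := fun i => ∑ j ∈ Finset.Icc 1 i, (a j - a (j - 1)) / r (N - j + 1) with htdef
  have ht0 : t 0 = 0 := by simp [htdef]
  have ht_succ : ∀ n, t (n + 1) = t n + (a (n + 1) - a n) / r (N - (n + 1) + 1) := by
    intro n
    have := Finset.sum_Icc_succ_top (f := fun j => (a j - a (j - 1)) / r (N - j + 1))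
      (Nat.one_le_iff_ne_zero.mpr (Nat.succ_ne_zero n))
    simpa [htdef] using this
  have hS_succ : ∀ n, S (n + 1) = S n + a (n + 1) * (1 / r (N - (n + 1) + 1) - 1 / r (N - (n + 1))) := by
    intro n
    have := Finset.sum_Icc_succ_top
      (f := fun j => a j * (1 / r (N - j + 1) - 1 / r (N - j)))
      (Nat.one_le_iff_ne_zero.mpr (Nat.succ_ne_zero n))
    simpa [hSdef] using this
  have hsum_succ : ∀ n, (∑ j ∈ Finset.Icc 1 (n + 1), a j) = (∑ j ∈ Finset.Icc 1 n, a j) + a (n + 1) := by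
    intro n
    exact Finset.sum_Icc_succ_top (Nat.one_le_iff_ne_zero.mpr (Nat.succ_ne_zero n)) _
  have hgam : ∀ i, gam r m x i = r (N - i + 1) * (x - S (i - 1)) := by
    intro i
    rw [gam, ← hNdef, hSdef]
    congr 2
    refine Finset.sum_congr rfl fun j hj => ?_
    rw [haat j (Finset.mem_Icc.mp hj).1]
  have hSt : ∀ i, i < N → S i = t i - a i / r (N - i) := by
    intro i
    induction i with
    | zero => intro _; simp [hSdef, htdef, ha0]
    | succ n ih =>
        intro h
        have hn : n < N := Nat.lt_of_succ_lt h
        have hidx : N - (n + 1) + 1 = N - n := by omega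
        have hr1 : r (N - n) ≠ 0 := ne_of_gt (hrpos _ (by omega))
        have hr2 : r (N - (n + 1)) ≠ 0 := ne_of_gt (hrpos _ (by omega))
        rw [hS_succ n, ht_succ n, ih hn, hidx]
        field_simp
        ring
  have hL5 : ∀ i, i ≤ N → K * t i ≤ (∑ j ∈ Finset.Icc 1 i, a j) + ((N : ℝ) - i) * a i := by
    intro i
    induction i with
    | zero => intro _; simp [ht0, ha0]
    | succ n ih =>
        intro h
        have hn : n ≤ N := by omega
        have hidx : N - (n + 1) + 1 = N - n := by omega
        have hrp : 0 < r (N - n) := hrpos _ (by omega)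
        have hKn : K ≤ ((N - n : ℕ) : ℝ) * r (N - n) := hK _ (by omega)
        have hcast : ((N - n : ℕ) : ℝ) = (N : ℝ) - n := by rw [Nat.cast_sub hn]
        have hmonot : a n ≤ a (n + 1) := hamono n (n + 1) (by omega) h
        have hterm : K * ((a (n + 1) - a n) / r (N - n)) ≤ ((N : ℝ) - n) * (a (n + 1) - a n) := by
          have h1 : K / r (N - n) ≤ (N : ℝ) - n := by
            rw [div_le_iff₀ hrp, ← hcast]
            calc K ≤ ((N - n : ℕ) : ℝ) * r (N - n) := hKn
              _ = ((N - n : ℕ) : ℝ) * r (N - n) := rfl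
          have h2 : 0 ≤ a (n + 1) - a n := by linarith
          calc K * ((a (n + 1) - a n) / r (N - n)) = (K / r (N - n)) * (a (n + 1) - a n) := by
                ring
            _ ≤ ((N : ℝ) - n) * (a (n + 1) - a n) := mul_le_mul_of_nonneg_right h1 h2
        rw [ht_succ n, hsum_succ n, hidx, mul_add]
        push_cast
        have hih := ih hn
        nlinarith [hterm, hih]
  -- facts about irdx
  have hfacts : irdx r m x ≤ N ∧ (1 ≤ irdx r m x → atom m (irdx r m x) ≤ gam r m x (irdx r m x)) ∧
      (∀ k, 1 ≤ k → k ≤ N → atom m k ≤ gam r m x k → k ≤ irdx r m x) := by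
    rw [irdx, ← hNdef]
    set F := (Finset.Icc 1 N).filter (fun k => atom m k ≤ gam r m x k) with hFdef
    rcases hFm : F.max with _ | b
    · have hFe : F = ∅ := Finset.max_eq_bot.mp hFm
      refine ⟨Nat.zero_le _, fun h => absurd h (by decide), ?_⟩
      intro k h1 h2 h3
      exfalso
      have : k ∈ F := by
        rw [hFdef]; exact Finset.mem_filter.mpr ⟨Finset.mem_Icc.mpr ⟨h1, h2⟩, h3⟩
      rw [hFe] at this; exact absurd this (Finset.notMem_empty k)
    · have hbF : b ∈ F := Finset.mem_of_max hFm
      have hb : 1 ≤ b ∧ b ≤ N := Finset.mem_Icc.mp (Finset.mem_filter.mp hbF).1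
      simp only [show WithBot.unbotD 0 (some b) = b from rfl]
      refine ⟨hb.2, fun _ => (Finset.mem_filter.mp hbF).2, ?_⟩
      intro k h1 h2 h3
      have hkF : k ∈ F := Finset.mem_filter.mpr ⟨Finset.mem_Icc.mpr ⟨h1, h2⟩, h3⟩
      have := Finset.le_max hkF
      rw [hFm] at this
      exact WithBot.coe_le_coe.mp this
  obtain ⟨hiN, himem, himax⟩ := hfacts
  set i := irdx r m x with hidef
  clear_value i
  -- x ≥ t i
  have htle : t i ≤ x := by
    rcases Nat.eq_zero_or_pos i with hi0 | hi1
    · rw [hi0, ht0]; exact hx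
    · obtain ⟨n, rfl⟩ : ∃ n, i = n + 1 := ⟨i - 1, by omega⟩
      have hnN : n < N := by omega
      have hrp : 0 < r (N - n) := hrpos _ (by omega)
      have hidx : N - (n + 1) + 1 = N - n := by omega
      have hmem := himem hi1
      rw [hgam (n + 1), ← haat (n + 1) (by omega)] at hmem
      simp only [Nat.add_sub_cancel] at hmem
      rw [hidx, hSt n hnN] at hmem
      have expand : r (N - n) * (x - (t n - a n / r (N - n))) = r (N - n) * (x - t n) + a n := by
        field_simp
        ring
      rw [expand] at hmem
      have key : a (n + 1) - a n ≤ r (N - n) * (x - t n) := by linarith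
      have e2 := ht_succ n
      rw [hidx] at e2
      rw [e2]
      have hq : (a (n + 1) - a n) / r (N - n) ≤ x - t n := by
        rw [div_le_iff₀ hrp]
        have := mul_comm (r (N - n)) (x - t n)
        linarith
      linarith
  rcases eq_or_lt_of_le hiN with hcase | hcase
  · -- i = N : everything served
    have hγ : gammaStar r m x = gam r m x N := by
      rw [gammaStar, if_neg hm, ← hNdef, ← hidef, hcase, min_eq_right (by omega)]
    have hall : ∀ b ∈ m, ¬ (gammaStar r m x < b) := by
      intro b hb
      push_neg
      rw [hγ]
      have hbl : b ∈ (m.sort (· ≤ ·)) := by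
        rwa [← Multiset.mem_coe, Multiset.sort_eq]
      obtain ⟨k, hk, rfl⟩ := List.mem_iff_getElem.mp hbl
      have hlen : (m.sort (· ≤ ·)).length = N := Multiset.length_sort _
      have hbatom : (m.sort (· ≤ ·))[k] = atom m (k + 1) := by
        rw [atom]
        simp only [Nat.add_sub_cancel]
        rw [List.getD_eq_getElem _ _ (by omega)]
      rw [hbatom]
      calc atom m (k + 1) ≤ atom m N := atom_mono m (k + 1) N (by omega) (by omega) le_rfl
        _ ≤ gam r m x N := by rw [← hcase]; exact himem (by omega)
    have hzero : PhiM r m x = 0 := by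
      rw [PhiM]
      rw [Multiset.eq_zero_iff_forall_notMem]
      intro b hb
      obtain ⟨c, hc, rfl⟩ := Multiset.mem_map.mp hb
      have hc2 := Multiset.mem_filter.mp hc
      exact hall c hc2.1 hc2.2
    rw [hzero]
    simpa using le_max_right (m.sum - K * x) 0
  · -- i < N
    set γ := gam r m x (i + 1) with hγdef
    have hγeq : gammaStar r m x = γ := by
      rw [gammaStar, if_neg hm, ← hNdef, ← hidef, min_eq_left (by omega)]
    have hidx : N - (i + 1) + 1 = N - i := by omega
    have hrp : 0 < r (N - i) := hrpos _ (by omega)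
    have hγt : γ = r (N - i) * (x - t i) + a i := by
      rw [hγdef, hgam (i + 1)]
      simp only [Nat.add_sub_cancel]
      rw [hidx, hSt i hcase]
      field_simp
      ring
    have haiγ : a i ≤ γ := by
      rw [hγt]
      nlinarith
    have hsuccγ : γ < a (i + 1) := by
      by_contra hcon
      push_neg at hcon
      have : i + 1 ≤ i := himax (i + 1) (by omega) (by omega)
        (by rw [← haat (i + 1) (by omega)]; exact hcon)
      omega
    have hmin_sum : (m.map (fun b => min b γ)).sum ≥ K * x := by
      rw [multiset_sum_map, ← hNdef]
      have hsplit : (∑ j ∈ Finset.Icc 1 N, min (atom m j) γ)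
          = (∑ j ∈ Finset.Icc 1 i, min (atom m j) γ)
            + ∑ j ∈ Finset.Ioc i N, min (atom m j) γ := by
        rw [← zero_add 1, Finset.Icc_add_one_left_eq_Ioc, Finset.Icc_add_one_left_eq_Ioc]
        exact (Finset.sum_Ioc_consecutive _ (Nat.zero_le i) (le_of_lt hcase)).symm
      rw [hsplit]
      have h1 : (∑ j ∈ Finset.Icc 1 i, min (atom m j) γ) = ∑ j ∈ Finset.Icc 1 i, a j := by
        refine Finset.sum_congr rfl fun j hj => ?_
        obtain ⟨hj1, hj2⟩ := Finset.mem_Icc.mp hj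
        rw [← haat j hj1]
        exact min_eq_left (le_trans (hamono j i hj2 (by omega)) haiγ)
      have h2 : (∑ j ∈ Finset.Ioc i N, min (atom m j) γ) = ((N - i : ℕ) : ℝ) * γ := by
        have hcg : ∀ j ∈ Finset.Ioc i N, min (atom m j) γ = γ := by
          intro j hj
          obtain ⟨hj1, hj2⟩ := Finset.mem_Ioc.mp hj
          refine min_eq_right (le_of_lt (lt_of_lt_of_le hsuccγ ?_))
          rw [haat (i + 1) (by omega)]
          exact atom_mono m (i + 1) j (by omega) (by omega) hj2
        rw [Finset.sum_congr rfl hcg, Finset.sum_const, Nat.card_Ioc, nsmul_eq_mul]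
      rw [h1, h2]
      have hcast : ((N - i : ℕ) : ℝ) = (N : ℝ) - i := by
        rw [Nat.cast_sub (le_of_lt hcase)]
      have hKn : K ≤ ((N - i : ℕ) : ℝ) * r (N - i) := hK _ (by omega)
      have hL := hL5 i (le_of_lt hcase)
      rw [hcast] at hKn
      have hg : ((N - i : ℕ) : ℝ) * γ
          = ((N : ℝ) - i) * r (N - i) * (x - t i) + ((N : ℝ) - i) * a i := by
        rw [hcast, hγt]; ring
      have hge : K * (x - t i) ≤ ((N : ℝ) - i) * r (N - i) * (x - t i) :=
        mul_le_mul_of_nonneg_right hKn (by linarith)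
      nlinarith [hL, hge, hg]
    have hphi : (PhiM r m x).sum + (m.map (fun b => min b γ)).sum = m.sum := by
      rw [PhiM, hγeq]
      exact phi_sum_id γ m
    have hfin : (PhiM r m x).sum ≤ m.sum - K * x := by linarith [hphi, hmin_sum]
    exact le_trans hfin (le_max_left _ _)


private lemma abs_min_sub_min (a b c : ℝ) : |min a c - min b c| ≤ |a - b| := by
  have h1 := le_abs_self (a - b)
  have h2 := neg_abs_le (a - b)
  rw [abs_le]
  rcases le_total a c with ha | ha <;> rcases le_total b c with hb | hb
  · rw [min_eq_left ha, min_eq_left hb]; constructor <;> linarith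
  · rw [min_eq_left ha, min_eq_right hb]; constructor <;> linarith
  · rw [min_eq_right ha, min_eq_left hb]; constructor <;> linarith
  · rw [min_eq_right ha, min_eq_right hb]; constructor <;> linarith

private lemma cobound {Ω : Type*} [MeasurableSpace Ω] {P : Measure Ω} [IsProbabilityMeasure P]
    {θ : Ω → Ω} (hθ : MeasurePreserving θ P P) {W s : Ω → ℝ}
    (hW : Measurable W) (hW0 : ∀ ω, 0 ≤ W ω) (hs : Integrable s P)
    (heq : ∀ᵐ ω ∂P, W (θ ω) = W ω + s ω) : ∫ ω, s ω ∂P = 0 := by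
  have hgmeas : ∀ n : ℕ, Measurable (fun ω => min (W ω) (n : ℝ)) :=
    fun n => hW.min measurable_const
  have hgint : ∀ n : ℕ, Integrable (fun ω => min (W ω) (n : ℝ)) P := by
    intro n
    refine Integrable.mono' (integrable_const (n : ℝ)) (hgmeas n).aestronglyMeasurable ?_
    refine ae_of_all _ fun ω => ?_
    rw [Real.norm_eq_abs, abs_of_nonneg (le_min (hW0 ω) (Nat.cast_nonneg n))]
    exact min_le_right _ _
  have hcomp : ∀ n : ℕ, ∫ ω, min (W (θ ω)) (n : ℝ) ∂P = ∫ ω, min (W ω) (n : ℝ) ∂P := by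
    intro n
    have hg : AEStronglyMeasurable (fun ω => min (W ω) (n : ℝ)) (P.map θ) := by
      rw [hθ.map_eq]; exact (hgmeas n).aestronglyMeasurable
    have h := integral_map (μ := P) hθ.measurable.aemeasurable hg
    rw [hθ.map_eq] at h
    exact h.symm
  have hzero : ∀ n : ℕ, ∫ ω, (min (W ω + s ω) (n : ℝ) - min (W ω) (n : ℝ)) ∂P = 0 := by
    intro n
    have hae : (fun ω => min (W ω + s ω) (n : ℝ) - min (W ω) (n : ℝ)) =ᵐ[P]
        (fun ω => min (W (θ ω)) (n : ℝ) - min (W ω) (n : ℝ)) := by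
      filter_upwards [heq] with ω h; rw [h]
    have hint1 : Integrable (fun ω => min (W (θ ω)) (n : ℝ)) P := by
      refine Integrable.mono' (integrable_const (n : ℝ))
        ((hgmeas n).comp hθ.measurable).aestronglyMeasurable ?_
      refine ae_of_all _ fun ω => ?_
      rw [Real.norm_eq_abs, abs_of_nonneg (le_min (hW0 (θ ω)) (Nat.cast_nonneg n))]
      exact min_le_right _ _
    rw [integral_congr_ae hae, integral_sub hint1 (hgint n), hcomp n, sub_self]
  have hmeasF : ∀ n : ℕ, AEStronglyMeasurable
      (fun ω => min (W ω + s ω) (n : ℝ) - min (W ω) (n : ℝ)) P := by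
    intro n
    have h1 : AEMeasurable (fun ω => W ω + s ω) P := hW.aemeasurable.add hs.1.aemeasurable
    exact ((h1.min aemeasurable_const).sub
      (hW.aemeasurable.min aemeasurable_const)).aestronglyMeasurable
  have hlim : Tendsto (fun n : ℕ => ∫ ω, (min (W ω + s ω) (n : ℝ) - min (W ω) (n : ℝ)) ∂P)
      atTop (nhds (∫ ω, s ω ∂P)) := by
    refine tendsto_integral_of_dominated_convergence (fun ω => |s ω|) hmeasF hs.abs ?_ ?_
    · intro n
      refine ae_of_all _ fun ω => ?_
      rw [Real.norm_eq_abs]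
      have := abs_min_sub_min (W ω + s ω) (W ω) (n : ℝ)
      simpa using this
    · refine ae_of_all _ fun ω => ?_
      have hev : ∀ᶠ n : ℕ in atTop,
          (min (W ω + s ω) (n : ℝ) - min (W ω) (n : ℝ)) = s ω := by
        obtain ⟨n0, hn0⟩ := exists_nat_ge (max (W ω + s ω) (W ω))
        filter_upwards [eventually_ge_atTop n0] with n hn
        have hcast : (n0 : ℝ) ≤ (n : ℝ) := Nat.cast_le.mpr hn
        have h1 : W ω + s ω ≤ (n : ℝ) := le_trans (le_trans (le_max_left _ _) hn0) hcast
        have h2 : W ω ≤ (n : ℝ) := le_trans (le_trans (le_max_right _ _) hn0) hcast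
        rw [min_eq_left h1, min_eq_left h2]
        ring
      exact Tendsto.congr' (hev.mono fun n h => h.symm) tendsto_const_nhds
  have : Tendsto (fun _ : ℕ => (0 : ℝ)) atTop (nhds (∫ ω, s ω ∂P)) := by
    refine hlim.congr fun n => ?_
    rw [hzero n]
  exact tendsto_nhds_unique this tendsto_const_nhds


/-- Any stationary service profile `μ^r` of the generalized processor-sharing queue
(with `sup_n n r(n) ≤ 1` and `K_r = inf_n n r(n) > 0`), under the stability condition
`E[σ] < K_r E[ξ]`, has workload dominated a.s. by the Loynes solution `W^{K_r}` of
`W ∘ θ = [W + σ - K_r ξ]⁺`. -/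
theorem stmt17 {Ω : Type*} [MeasurableSpace Ω] (P : Measure Ω) [IsProbabilityMeasure P]
    (θ θinv : Ω → Ω) (hθ : Ergodic θ P) (hθinv : Measurable θinv)
    (hli : Function.LeftInverse θinv θ) (hri : Function.RightInverse θinv θ)
    (σ ξ : Ω → ℝ) (hσint : Integrable σ P) (hξint : Integrable ξ P)
    (hσ0 : ∀ ω, 0 ≤ σ ω) (hξ0 : ∀ ω, 0 < ξ ω)
    (r : ℕ → ℝ) (hrmono : ∀ p q, 1 ≤ p → p ≤ q → r q ≤ r p)
    (hrsup : ∀ n : ℕ, 1 ≤ n → (n : ℝ) * r n ≤ 1)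
    (K : ℝ) (hKpos : 0 < K)
    (hKglb : IsGLB {y : ℝ | ∃ n : ℕ, 1 ≤ n ∧ y = (n : ℝ) * r n} K)
    (hstab : ∫ ω, σ ω ∂P < K * ∫ ω, ξ ω ∂P)
    (W : Ω → ℝ) (hWmeas : Measurable W) (hW0 : ∀ ω, 0 ≤ W ω)
    (hWeq : ∀ᵐ ω ∂P, W (θ ω) = max (W ω + σ ω - K * ξ ω) 0)
    (μ : Ω → Multiset ℝ) (hμ0 : ∀ ω, ∀ a ∈ μ ω, (0:ℝ) ≤ a)
    (hμmeas : Measurable fun ω => (μ ω).sum)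
    (hμeq : ∀ᵐ ω ∂P, μ (θ ω) = PhiM r (σ ω ::ₘ μ ω) (ξ ω)) :
    ∀ᵐ ω ∂P, (μ ω).sum ≤ W ω := by
  classical
  set V : Ω → ℝ := fun ω => (μ ω).sum with hVdef
  have hVmeas : Measurable V := hμmeas
  have hGmeas : Measurable (fun ω => V ω - W ω) := hVmeas.sub hWmeas
  have hms : ∀ c : ℝ, MeasurableSet {ω | V ω - W ω ≤ c} :=
    fun c => measurableSet_le hGmeas measurable_const
  have hKle : ∀ n : ℕ, 1 ≤ n → K ≤ (n : ℝ) * r n := fun n hn => hKglb.1 ⟨n, hn, rfl⟩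
  -- one-step workload inequality
  have hstep : ∀ᵐ ω ∂P, V (θ ω) ≤ max (V ω + σ ω - K * ξ ω) 0 := by
    filter_upwards [hμeq] with ω h
    have hmne : (σ ω ::ₘ μ ω) ≠ 0 := Multiset.cons_ne_zero
    have hma : ∀ b ∈ (σ ω ::ₘ μ ω), 0 ≤ b := by
      intro b hb
      rcases Multiset.mem_cons.mp hb with rfl | hb
      · exact hσ0 ω
      · exact hμ0 ω b hb
    have hbound := phiM_sum_le r K hKpos hKle _ hmne hma (ξ ω) (hξ0 ω).le
    show (μ (θ ω)).sum ≤ _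
    rw [h]
    refine le_trans hbound (le_of_eq ?_)
    rw [Multiset.sum_cons]
    congr 1
    show σ ω + (μ ω).sum - K * ξ ω = V ω + σ ω - K * ξ ω
    ring
  -- contraction
  have key : ∀ c : ℝ, 0 ≤ c → (∀ᵐ ω ∂P, V ω - W ω ≤ c → V (θ ω) - W (θ ω) ≤ c) := by
    intro c hc
    filter_upwards [hstep, hWeq] with ω h1 h2
    intro h3
    have hmx : max (V ω + σ ω - K * ξ ω) 0 ≤ max (W ω + σ ω - K * ξ ω) 0 + c := by
      refine max_le ?_ ?_
      · have := le_max_left (W ω + σ ω - K * ξ ω) (0 : ℝ); linarith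
      · have := le_max_right (W ω + σ ω - K * ξ ω) (0 : ℝ); linarith
    rw [h2]
    linarith
  -- 0-1 law
  have h01 : ∀ c : ℝ, 0 ≤ c → P {ω | V ω - W ω ≤ c} = 0 ∨ P {ω | V ω - W ω ≤ c} = 1 := by
    intro c hc
    have hsub : {ω | V ω - W ω ≤ c} ≤ᵐ[P] θ ⁻¹' {ω | V ω - W ω ≤ c} := by
      rw [ae_le_set]
      refine measure_mono_null ?_ (ae_iff.mp (key c hc))
      intro ω hω
      simp only [Set.mem_diff, Set.mem_setOf_eq, Set.mem_preimage] at hω ⊢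
      exact fun h => hω.2 (h hω.1)
    rcases hθ.ae_empty_or_univ_of_ae_le_preimage' (hms c).nullMeasurableSet hsub
        (measure_ne_top P _) with h | h
    · left; simpa using measure_congr h
    · right; rw [measure_congr h, measure_univ]
  by_contra hcon
  have hA0 : P {ω | V ω - W ω ≤ 0} = 0 := by
    rcases h01 0 le_rfl with h | h
    · exact h
    · exfalso
      apply hcon
      have hae : ∀ᵐ ω ∂P, ω ∈ {ω | V ω - W ω ≤ 0} := by
        rw [← prob_compl_eq_zero_iff (hms 0)] at h
        rw [ae_iff]
        convert h using 2
        rfl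
      filter_upwards [hae] with ω h'
      have : V ω - W ω ≤ 0 := h'
      show (μ ω).sum ≤ W ω
      have hv : V ω = (μ ω).sum := rfl
      linarith [hv ▸ this]
  have hexist : ∃ n : ℕ, P {ω | V ω - W ω ≤ (n : ℝ)} = 1 := by
    by_contra hno
    push_neg at hno
    have hall0 : ∀ n : ℕ, P {ω | V ω - W ω ≤ (n : ℝ)} = 0 := fun n =>
      (h01 n (Nat.cast_nonneg n)).resolve_right (hno n)
    have hnull : P (⋃ n : ℕ, {ω | V ω - W ω ≤ (n : ℝ)}) = 0 := measure_iUnion_null hall0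
    have huniv : (⋃ n : ℕ, {ω | V ω - W ω ≤ (n : ℝ)}) = Set.univ := by
      ext ω
      simp only [Set.mem_iUnion, Set.mem_univ, iff_true, Set.mem_setOf_eq]
      exact exists_nat_ge (V ω - W ω)
    rw [huniv, measure_univ] at hnull
    simp at hnull
  set Z := {c : ℝ | 0 ≤ c ∧ P {ω | V ω - W ω ≤ c} = 1} with hZdef
  have hZne : Z.Nonempty := ⟨(hexist.choose : ℕ), Nat.cast_nonneg _, hexist.choose_spec⟩
  have hZbdd : BddBelow Z := ⟨0, fun c hc => hc.1⟩
  set c₀ := sInf Z with hc0def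
  have hc0nonneg : 0 ≤ c₀ := le_csInf hZne fun c hc => hc.1
  have hmono : ∀ c d : ℝ, c ≤ d → P {ω | V ω - W ω ≤ c} ≤ P {ω | V ω - W ω ≤ d} :=
    fun c d h => measure_mono fun ω hω => le_trans hω h
  have hup : ∀ c, c₀ < c → P {ω | V ω - W ω ≤ c} = 1 := by
    intro c hc
    obtain ⟨z, hz, hzc⟩ := exists_lt_of_csInf_lt hZne hc
    refine le_antisymm prob_le_one ?_
    calc (1 : ENNReal) = P {ω | V ω - W ω ≤ z} := hz.2.symm
      _ ≤ _ := hmono _ _ hzc.le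
  have hdown : ∀ c, 0 ≤ c → c < c₀ → P {ω | V ω - W ω ≤ c} = 0 := by
    intro c h0 hc
    rcases h01 c h0 with h | h
    · exact h
    · exfalso
      have : c₀ ≤ c := csInf_le hZbdd ⟨h0, h⟩
      linarith
  have hGle : ∀ᵐ ω ∂P, V ω - W ω ≤ c₀ := by
    have hnull : ∀ n : ℕ, P {ω | V ω - W ω ≤ c₀ + 1 / (n + 1)}ᶜ = 0 := by
      intro n
      have hpos : (0 : ℝ) < 1 / ((n : ℝ) + 1) := by positivity
      have h1 : P {ω | V ω - W ω ≤ c₀ + 1 / (n + 1)} = 1 := hup _ (by linarith)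
      rw [prob_compl_eq_zero_iff (hms _)]
      exact h1
    rw [ae_iff]
    refine measure_mono_null ?_ (measure_iUnion_null hnull)
    intro ω hω
    simp only [Set.mem_setOf_eq, not_le] at hω
    obtain ⟨n, hn⟩ := exists_nat_one_div_lt (show (0 : ℝ) < V ω - W ω - c₀ by linarith)
    refine Set.mem_iUnion.mpr ⟨n, ?_⟩
    simp only [Set.mem_compl_iff, Set.mem_setOf_eq, not_le]
    linarith
  have hGge : ∀ᵐ ω ∂P, c₀ ≤ V ω - W ω := by
    have hnull : ∀ n : ℕ, P {ω | V ω - W ω ≤ c₀ - 1 / (n + 1)} = 0 := by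
      intro n
      have hpos : (0 : ℝ) < 1 / ((n : ℝ) + 1) := by positivity
      rcases le_or_gt 0 (c₀ - 1 / (n + 1)) with h | h
      · exact hdown _ h (by linarith)
      · have hle := hmono (c₀ - 1 / (n + 1)) 0 h.le
        rw [hA0] at hle
        exact le_antisymm hle zero_le
    rw [ae_iff]
    refine measure_mono_null ?_ (measure_iUnion_null hnull)
    intro ω hω
    simp only [Set.mem_setOf_eq, not_le] at hω
    obtain ⟨n, hn⟩ := exists_nat_one_div_lt (show (0 : ℝ) < c₀ - (V ω - W ω) by linarith)
    refine Set.mem_iUnion.mpr ⟨n, ?_⟩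
    simp only [Set.mem_setOf_eq]
    linarith
  have hc0pos : 0 < c₀ := by
    rcases eq_or_lt_of_le hc0nonneg with h | h
    · exfalso
      have h1 : P {ω | V ω - W ω ≤ 0} = 1 := by
        rw [← prob_compl_eq_zero_iff (hms 0), ae_iff] at *
        refine measure_mono_null ?_ hGle
        intro ω hω
        simp only [Set.mem_compl_iff, Set.mem_setOf_eq, not_le] at hω ⊢
        rw [← h]
        exact hω
      rw [hA0] at h1
      exact zero_ne_one h1
    · exact h
  have hGeq : ∀ᵐ ω ∂P, V ω - W ω = c₀ := by
    filter_upwards [hGle, hGge] with ω h1 h2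
    linarith
  have hGθ : ∀ᵐ ω ∂P, V (θ ω) - W (θ ω) = c₀ :=
    hθ.toMeasurePreserving.quasiMeasurePreserving.ae hGeq
  have hsnonneg : ∀ᵐ ω ∂P, 0 ≤ W ω + σ ω - K * ξ ω := by
    filter_upwards [hstep, hWeq, hGeq, hGθ] with ω h1 h2 h3 h4
    by_contra hneg
    push_neg at hneg
    have hW2 : W (θ ω) = 0 := by rw [h2, max_eq_right hneg.le]
    have hV2 : V (θ ω) = c₀ := by rw [hW2] at h4; linarith
    have hVω : V ω = W ω + c₀ := by linarith
    have hlt : max (V ω + σ ω - K * ξ ω) 0 < c₀ := by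
      rw [hVω]
      exact max_lt (by linarith) hc0pos
    rw [hV2] at h1
    linarith
  have hWlin : ∀ᵐ ω ∂P, W (θ ω) = W ω + (σ ω - K * ξ ω) := by
    filter_upwards [hWeq, hsnonneg] with ω h1 h2
    rw [h1, max_eq_left (by linarith)]
    ring
  have hsint : Integrable (fun ω => σ ω - K * ξ ω) P := hσint.sub (hξint.const_mul K)
  have hzero := cobound hθ.toMeasurePreserving hWmeas hW0 hsint hWlin
  rw [integral_sub hσint (hξint.const_mul K), integral_const_mul] at hzero
  linarith
end
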